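/- Let m be odd and let 𝒥 = (J_1,…,J_m) be a cover of I = {1,…,n} satisfying conditions (B1) and (B2). For each k let W^{J_k} have the Gibbs block structure for J_k, let ε ∈ [0,1), and let Ŵ^{J_k} have entries Ŵ^{J_k}_{i,j} = W^{J_k}_{i,j} + ε·1[i ∈ J_k and j ∈ J_k ∪ ∂J_k]. Set 𝒲̂ = 𝒲̂_even·𝒲̂_odd with 𝒲̂_odd = Ŵ^{J_m}·Ŵ^{J_{m−2}}⋯Ŵ^{J_3}·Ŵ^{J_1} and 𝒲̂_even = Ŵ^{J_{m−1}}⋯Ŵ^{J_4}·Ŵ^{J_2}. Let J_{−k} = ⋃_{l≠k} J_l, L = max_k |J_k|, λ = max_k max_{i ∈ I∖J_{−k}} (W^{J_k}_{i,∂−J_k} + W^{J_k}_{i,∂+J_k}), and W̄ = max_k max_{i∈J_k} Σ_{j∈∂J_k} W^{J_k}_{i,j} (with conventions W^{J_1}_{i,∂−J_1} = 0, W^{J_m}_{i,∂+J_m} = 0). Let r be a vector with [r]_i = a when i ∈ I∖J_{−k} for even k, [r]_i = a' when i ∈ I∖J_{−k} for odd k, and [r]_i = b when i ∈ J_k ∩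 J_{−k} for even k, where a, a', b are positive constants, and set c = 2a + L·max(a', b). Then: [𝒲̂r]_i ≤ λ²a + ε(λc + 2λa + 2εc + La·max(1,W̄) + εLc) for i ∈ I∖J_{−k} with k even; [𝒲̂r]_i ≤ λa + ε(2a + L·max(a',b)) for i ∈ I∖J_{−k} with k odd; and [𝒲̂r]_i ≤ λ·W̄·a + ε(W̄c + 2λa + 2εc + La·max(1,W̄) + εLc) for i ∈ J_k ∩ J_{−k} with k even. -/

import Mathlib

open Finset

/-- The boundary `∂J` of a block `J ⊆ I`: indices outside `J` adjacent to `J`. -/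
def bdry {n : ℕ} (J : Finset (Fin n)) : Finset (Fin n) :=
  Finset.univ.filter fun t => t ∉ J ∧ ∃ s ∈ J, ((s : ℕ) = (t : ℕ) + 1 ∨ (t : ℕ) = (s : ℕ) + 1)

/-- `W` has the Gibbs block structure for block `J`: entries in `[0,1]`, rows outside `J`
are identity rows, and rows in `J` vanish outside `∂J`. -/
def GibbsBlock {n : ℕ} (J : Finset (Fin n)) (W : Matrix (Fin n) (Fin n) ℝ) : Prop :=
  (∀ i j, 0 ≤ W i j ∧ W i j ≤ 1) ∧
  (∀ i, i ∉ J → ∀ j, W i j = if i = j then 1 else 0) ∧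
  (∀ i ∈ J, ∀ j, j ∉ bdry J → W i j = 0)

/-- Maximum absolute row sum norm `‖A‖_∞`. -/
noncomputable def rowNorm {n : ℕ} (A : Matrix (Fin n) (Fin n) ℝ) : ℝ :=
  ⨆ i, ∑ j, |A i j|

/-- The list `[m, m-1, …, 1]`. -/
def descList (m : ℕ) : List ℕ := (List.range m).map fun i => m - i

/-- A block is a (nonempty) integer interval. -/
def IsIntervalBlock {n : ℕ} (J : Finset (Fin n)) : Prop :=
  J.Nonempty ∧ ∀ a ∈ J, ∀ b ∈ J, ∀ c : Fin n, a ≤ c → c ≤ b → c ∈ J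

/-- Smallest index of a block (as a natural number). -/
noncomputable def blockMin {n : ℕ} (J : Finset (Fin n)) : ℕ :=
  sInf {t : ℕ | ∃ s ∈ J, (s : ℕ) = t}

/-- Largest index of a block (as a natural number). -/
def blockMax {n : ℕ} (J : Finset (Fin n)) : ℕ := J.sup fun t => (t : ℕ)

/-- Condition (B1): blocks are intervals, ordered by their min and max elements. -/
def CondB1 {n : ℕ} (m : ℕ) (J : ℕ → Finset (Fin n)) : Prop :=
  (∀ k ∈ Finset.Icc 1 m, IsIntervalBlock (J k)) ∧
  ∀ j k, 1 ≤ j → j < k → k ≤ m →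
    blockMin (J j) < blockMin (J k) ∧ blockMax (J j) < blockMax (J k)

/-- Condition (B2): non-consecutive blocks are separated. -/
def CondB2 {n : ℕ} (m : ℕ) (J : ℕ → Finset (Fin n)) : Prop :=
  ∀ j k, 1 ≤ j → j + 2 ≤ k → k ≤ m → blockMax (J j) + 1 < blockMin (J k)

/-- Matrix entry addressed with integer indices; out-of-range indices give `0`. -/
noncomputable def entryZ {n : ℕ} (A : Matrix (Fin n) (Fin n) ℝ) (i j : ℤ) : ℝ :=
  if hi : 0 ≤ i ∧ i < (n : ℤ) then
    if hj : 0 ≤ j ∧ j < (n : ℤ) then A ⟨i.toNat, by omega⟩ ⟨j.toNat, by omega⟩ else 0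
  else 0

/-- `J_{-k} = ⋃_{l ≠ k} J_l`. -/
def Jminus {n : ℕ} (m : ℕ) (J : ℕ → Finset (Fin n)) (k : ℕ) : Finset (Fin n) :=
  ((Finset.Icc 1 m).erase k).biUnion J

/-- Left boundary entry `W^{J_k}_{i, ∂−J_k}`, with the conventions that it is `0` for the
first block `k = 1` and for nonexistent boundary points. -/
noncomputable def eL {n : ℕ} (m : ℕ) (J : ℕ → Finset (Fin n))
    (W : ℕ → Matrix (Fin n) (Fin n) ℝ) (k : ℕ) (i : Fin n) : ℝ :=
  if k = 1 then 0 else entryZ (W k) (i : ℤ) ((blockMin (J k) : ℤ) - 1)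

/-- Right boundary entry `W^{J_k}_{i, ∂+J_k}`, with the conventions that it is `0` for the
last block `k = m` and for nonexistent boundary points. -/
noncomputable def eR {n : ℕ} (m : ℕ) (J : ℕ → Finset (Fin n))
    (W : ℕ → Matrix (Fin n) (Fin n) ℝ) (k : ℕ) (i : Fin n) : ℝ :=
  if k = m then 0 else entryZ (W k) (i : ℤ) ((blockMax (J k) : ℤ) + 1)

/-- The ε-perturbed matrix `Ŵ^{J_k}`. -/
noncomputable def hatW {n : ℕ} (J : ℕ → Finset (Fin n))
    (W : ℕ → Matrix (Fin n) (Fin n) ℝ) (ε : ℝ) (k : ℕ) : Matrix (Fin n) (Fin n) ℝ :=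
  fun i j => W k i j + if i ∈ J k ∧ j ∈ J k ∪ bdry (J k) then ε else 0

section Aux

variable {n : ℕ}

lemma blockMin_exists {J : Finset (Fin n)} (h : J.Nonempty) :
    ∃ s ∈ J, (s : ℕ) = blockMin J := by
  have hne : {t : ℕ | ∃ s ∈ J, (s : ℕ) = t}.Nonempty := by
    obtain ⟨s, hs⟩ := h; exact ⟨s, s, hs, rfl⟩
  have := Nat.sInf_mem hne
  exact this

lemma blockMin_le {J : Finset (Fin n)} {t : Fin n} (ht : t ∈ J) :
    blockMin J ≤ (t : ℕ) :=
  Nat.sInf_le ⟨t, ht, rfl⟩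

lemma le_blockMax {J : Finset (Fin n)} {t : Fin n} (ht : t ∈ J) :
    (t : ℕ) ≤ blockMax J :=
  Finset.le_sup ht

lemma blockMax_exists {J : Finset (Fin n)} (h : J.Nonempty) :
    ∃ s ∈ J, (s : ℕ) = blockMax J := by
  obtain ⟨s, hs, hval⟩ := Finset.exists_mem_eq_sup J h (fun t => (t : ℕ))
  exact ⟨s, hs, hval.symm⟩

lemma mem_bdry_iff {J : Finset (Fin n)} (hJ : IsIntervalBlock J) (t : Fin n) :
    t ∈ bdry J ↔ ((t : ℕ) + 1 = blockMin J ∨ (t : ℕ) = blockMax J + 1) := by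
  obtain ⟨hne, hconv⟩ := hJ
  obtain ⟨s0, hs0, hs0v⟩ := blockMin_exists hne
  obtain ⟨s1, hs1, hs1v⟩ := blockMax_exists hne
  constructor
  · rintro ht
    simp only [bdry, Finset.mem_filter, Finset.mem_univ, true_and] at ht
    obtain ⟨htJ, s, hsJ, hadj⟩ := ht
    rcases hadj with h1 | h2
    · left
      have hmin : blockMin J ≤ (s : ℕ) := blockMin_le hsJ
      by_contra hc
      have hlt : blockMin J ≤ (t : ℕ) := by omega
      exact htJ (hconv s0 hs0 s hsJ t (by omega) (by omega))
    · right
      have hmax : (s : ℕ) ≤ blockMax J := le_blockMax hsJ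
      by_contra hc
      have : (t : ℕ) ≤ blockMax J := by omega
      exact htJ (hconv s hsJ s1 hs1 t (by omega) (by omega))
  · rintro (h | h)
    · have htJ : t ∉ J := fun hmem => by
        have := blockMin_le hmem; omega
      simp only [bdry, Finset.mem_filter, Finset.mem_univ, true_and]
      exact ⟨htJ, s0, hs0, Or.inl (by omega)⟩
    · have htJ : t ∉ J := fun hmem => by
        have := le_blockMax hmem; omega
      simp only [bdry, Finset.mem_filter, Finset.mem_univ, true_and]
      exact ⟨htJ, s1, hs1, Or.inr (by omega)⟩

lemma not_mem_bdry_self {J : Finset (Fin n)} {t : Fin n} (ht : t ∈ bdry J) : t ∉ J := by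
  simp only [bdry, Finset.mem_filter, Finset.mem_univ, true_and] at ht
  exact ht.1

lemma card_bdry_le {J : Finset (Fin n)} (hJ : IsIntervalBlock J) : (bdry J).card ≤ 2 := by
  classical
  have hsub : bdry J ⊆ (Finset.univ.filter fun t : Fin n => (t : ℕ) + 1 = blockMin J) ∪
      (Finset.univ.filter fun t : Fin n => (t : ℕ) = blockMax J + 1) := by
    intro t ht
    rcases (mem_bdry_iff hJ t).1 ht with h | h
    · exact Finset.mem_union_left _ (by simp [h])
    · exact Finset.mem_union_right _ (by simp [h])
  calc (bdry J).card ≤ _ := Finset.card_le_card hsub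
    _ ≤ _ + _ := Finset.card_union_le _ _
    _ ≤ 2 := by
        have h1 : (Finset.univ.filter fun t : Fin n => (t : ℕ) + 1 = blockMin J).card ≤ 1 := by
          apply Finset.card_le_one.2
          intro a ha b hb
          simp only [Finset.mem_filter] at ha hb
          exact Fin.ext (by omega)
        have h2 : (Finset.univ.filter fun t : Fin n => (t : ℕ) = blockMax J + 1).card ≤ 1 := by
          apply Finset.card_le_one.2
          intro a ha b hb
          simp only [Finset.mem_filter] at ha hb
          exact Fin.ext (by omega)
        omega

end Aux
section Struct

variable {n m : ℕ} {J : ℕ → Finset (Fin n)}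

lemma interval_k (hB1 : CondB1 m J) {k : ℕ} (hk : k ∈ Finset.Icc 1 m) :
    IsIntervalBlock (J k) := hB1.1 k hk

lemma blockMin_one (hn : 1 ≤ n) (hB1 : CondB1 m J)
    (hcover : ∀ i : Fin n, ∃ k ∈ Finset.Icc 1 m, i ∈ J k) :
    blockMin (J 1) = 0 := by
  obtain ⟨l, hl, hmem⟩ := hcover ⟨0, by omega⟩
  simp only [Finset.mem_Icc] at hl
  have hle : blockMin (J l) = 0 := by
    have := blockMin_le hmem
    simp only [Nat.le_zero] at this ⊢
    exact this
  rcases Nat.eq_or_lt_of_le hl.1 with h1 | h1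
  · rw [h1]; exact hle
  · have := (hB1.2 1 l le_rfl h1 hl.2).1
    omega

lemma blockMax_m (hn : 1 ≤ n) (hm : 1 ≤ m) (hB1 : CondB1 m J)
    (hcover : ∀ i : Fin n, ∃ k ∈ Finset.Icc 1 m, i ∈ J k) :
    blockMax (J m) = n - 1 := by
  obtain ⟨l, hl, hmem⟩ := hcover ⟨n - 1, by omega⟩
  simp only [Finset.mem_Icc] at hl
  have hle := le_blockMax hmem
  simp only at hle
  have hub : ∀ t ∈ J m, (t : ℕ) ≤ n - 1 := fun t _ => by
    have := t.isLt; omega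
  have hmax_ub : blockMax (J m) ≤ n - 1 := Finset.sup_le hub
  rcases Nat.eq_or_lt_of_le hl.2 with h1 | h1
  · subst h1; omega
  · have := (hB1.2 l m hl.1 h1 le_rfl).2
    omega

/-- Support bounds: elements of `J k ∪ bdry (J k)` are within `[min-1, max+1]`. -/
lemma supp_bounds (hB1 : CondB1 m J) {k : ℕ} (hk : k ∈ Finset.Icc 1 m) {t : Fin n}
    (ht : t ∈ J k ∪ bdry (J k)) :
    blockMin (J k) ≤ (t : ℕ) + 1 ∧ (t : ℕ) ≤ blockMax (J k) + 1 := by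
  rcases Finset.mem_union.1 ht with h | h
  · have h1 := blockMin_le h
    have h2 := le_blockMax h
    omega
  · rcases (mem_bdry_iff (interval_k hB1 hk) t).1 h with h' | h'
    · constructor
      · omega
      · have : blockMin (J k) ≤ blockMax (J k) := by
          obtain ⟨s, hs, hv⟩ := blockMin_exists (interval_k hB1 hk).1
          have := le_blockMax hs; omega
        omega
    · constructor
      · have : blockMin (J k) ≤ blockMax (J k) := by
          obtain ⟨s, hs, hv⟩ := blockMin_exists (interval_k hB1 hk).1
          have := le_blockMax hs; omega
        omega
      · omega

/-- Far blocks miss the support of block `k`. -/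
lemma not_mem_far (hB1 : CondB1 m J) (hB2 : CondB2 m J) {k l : ℕ}
    (hk : k ∈ Finset.Icc 1 m) (hl : l ∈ Finset.Icc 1 m)
    (hfar : l + 2 ≤ k ∨ k + 2 ≤ l) {t : Fin n} (ht : t ∈ J l) :
    t ∉ J k ∪ bdry (J k) := by
  simp only [Finset.mem_Icc] at hk hl
  intro hmem
  have hb := supp_bounds hB1 (by simp [Finset.mem_Icc]; omega) hmem
  have h1 := blockMin_le ht
  have h2 := le_blockMax ht
  rcases hfar with h | h
  · have := hB2 l k hl.1 h hk.2
    omega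
  · have := hB2 k l hk.1 h hl.2
    omega

/-- Two distinct blocks containing a common point are adjacent. -/
lemma adjacent_of_mem (hB1 : CondB1 m J) (hB2 : CondB2 m J) {k l : ℕ}
    (hk : k ∈ Finset.Icc 1 m) (hl : l ∈ Finset.Icc 1 m) (hne : l ≠ k) {t : Fin n}
    (htk : t ∈ J k) (htl : t ∈ J l) : l + 1 = k ∨ l = k + 1 := by
  by_contra hc
  push_neg at hc
  have hfar : l + 2 ≤ k ∨ k + 2 ≤ l := by omega
  exact not_mem_far hB1 hB2 hk hl hfar htl (Finset.mem_union_left _ htk)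

lemma mem_Jminus_iff {k : ℕ} {i : Fin n} :
    i ∈ Jminus m J k ↔ ∃ l ∈ Finset.Icc 1 m, l ≠ k ∧ i ∈ J l := by
  simp only [Jminus, Finset.mem_biUnion, Finset.mem_erase]
  constructor
  · rintro ⟨l, ⟨hne, hl⟩, hmem⟩; exact ⟨l, hl, hne, hmem⟩
  · rintro ⟨l, hl, hne, hmem⟩; exact ⟨l, ⟨hne, hl⟩, hmem⟩

lemma mem_of_not_Jminus (hcover : ∀ i : Fin n, ∃ k ∈ Finset.Icc 1 m, i ∈ J k)
    {k : ℕ} (hk : k ∈ Finset.Icc 1 m) {i : Fin n} (hi : i ∉ Jminus m J k) : i ∈ J k := by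
  obtain ⟨l, hl, hmem⟩ := hcover i
  by_cases h : l = k
  · exact h ▸ hmem
  · exact absurd (mem_Jminus_iff.2 ⟨l, hl, h, hmem⟩) hi

/-- Location of boundary points: a boundary point of `J k` lies in exactly one block,
which is adjacent to `k`. -/
lemma bdry_loc (hn : 1 ≤ n) (hm : 1 ≤ m) (hB1 : CondB1 m J) (hB2 : CondB2 m J)
    (hcover : ∀ i : Fin n, ∃ k ∈ Finset.Icc 1 m, i ∈ J k)
    {k : ℕ} (hk : k ∈ Finset.Icc 1 m) {t : Fin n} (ht : t ∈ bdry (J k)) :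
    ∃ l ∈ Finset.Icc 1 m, (l + 1 = k ∨ l = k + 1) ∧ t ∈ J l ∧
      ∀ l' ∈ Finset.Icc 1 m, l' ≠ l → t ∉ J l' := by
  simp only [Finset.mem_Icc] at hk
  obtain ⟨l, hl, hmem⟩ := hcover t
  have htk : t ∉ J k := not_mem_bdry_self ht
  have hlk : l ≠ k := fun h => htk (h ▸ hmem)
  -- l is adjacent to k since t ∈ J l ∩ supp k
  have hadj : l + 1 = k ∨ l = k + 1 := by
    by_contra hc
    push_neg at hc
    have hfar : l + 2 ≤ k ∨ k + 2 ≤ l := by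
      simp only [Finset.mem_Icc] at hl; omega
    exact not_mem_far hB1 hB2 (by simp [Finset.mem_Icc]; omega) hl hfar hmem
      (Finset.mem_union_right _ ht)
  refine ⟨l, hl, hadj, hmem, ?_⟩
  intro l' hl' hne hmem'
  have hl'k : l' ≠ k := fun h => htk (h ▸ hmem')
  have hadj' : l' + 1 = k ∨ l' = k + 1 := by
    by_contra hc
    push_neg at hc
    have hfar : l' + 2 ≤ k ∨ k + 2 ≤ l' := by
      simp only [Finset.mem_Icc] at hl'; omega
    exact not_mem_far hB1 hB2 (by simp [Finset.mem_Icc]; omega) hl' hfar hmem'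
      (Finset.mem_union_right _ ht)
  -- So {l, l'} ⊆ {k-1, k+1}, l ≠ l'; then one is k-1 the other k+1; but then
  -- t ∈ J (k-1) ∩ J (k+1), far blocks: contradiction.
  have : (l + 1 = k ∧ l' = k + 1) ∨ (l = k + 1 ∧ l' + 1 = k) := by omega
  rcases this with ⟨h1, h2⟩ | ⟨h1, h2⟩
  · exact not_mem_far hB1 hB2 hl' hl (by omega) hmem (Finset.mem_union_left _ hmem')
  · exact not_mem_far hB1 hB2 hl hl' (by omega) hmem' (Finset.mem_union_left _ hmem)

end Struct
section Entry

variable {n : ℕ}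

lemma entryZ_coe (A : Matrix (Fin n) (Fin n) ℝ) (i : Fin n) (t : ℕ) (ht : t < n) :
    entryZ A (i : ℤ) (t : ℤ) = A i ⟨t, ht⟩ := by
  have h1 : (0 : ℤ) ≤ (i : ℤ) ∧ (i : ℤ) < (n : ℤ) :=
    ⟨Int.natCast_nonneg _, by exact_mod_cast i.isLt⟩
  have h2 : (0 : ℤ) ≤ (t : ℤ) ∧ (t : ℤ) < (n : ℤ) :=
    ⟨Int.natCast_nonneg _, by exact_mod_cast ht⟩
  rw [entryZ, dif_pos h1, dif_pos h2]
  congr 1 <;> exact Fin.ext (by simp)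

lemma entryZ_bounds {A : Matrix (Fin n) (Fin n) ℝ} (h : ∀ i j, 0 ≤ A i j ∧ A i j ≤ 1)
    (a b : ℤ) : 0 ≤ entryZ A a b ∧ entryZ A a b ≤ 1 := by
  rw [entryZ]
  split
  · split
    · exact h _ _
    · norm_num
  · norm_num

end Entry

section SumBdry

variable {n m : ℕ} {J : ℕ → Finset (Fin n)} {W : ℕ → Matrix (Fin n) (Fin n) ℝ}

lemma sum_bdry_eq (hn : 1 ≤ n) (hm : 1 ≤ m) (hB1 : CondB1 m J)
    (hcover : ∀ i : Fin n, ∃ k ∈ Finset.Icc 1 m, i ∈ J k)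
    {k : ℕ} (hk : k ∈ Finset.Icc 1 m) (i : Fin n) :
    ∑ j ∈ bdry (J k), W k i j = eL m J W k i + eR m J W k i := by
  classical
  have hkIcc := hk
  simp only [Finset.mem_Icc] at hkIcc
  have hIB := interval_k hB1 hk
  obtain ⟨s0, hs0, hs0v⟩ := blockMin_exists hIB.1
  obtain ⟨s1, hs1, hs1v⟩ := blockMax_exists hIB.1
  have hminmax : blockMin (J k) ≤ blockMax (J k) := by
    have := le_blockMax hs0; omega
  have hmaxlt : blockMax (J k) < n := by
    have := s1.isLt; omega
  set mn := blockMin (J k) with hmn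
  set mx := blockMax (J k) with hmx
  set Fl := (bdry (J k)).filter (fun j : Fin n => (j : ℕ) + 1 = mn) with hFl
  set Fr := (bdry (J k)).filter (fun j : Fin n => (j : ℕ) = mx + 1) with hFr
  have hunion : Fl ∪ Fr = bdry (J k) := by
    rw [hFl, hFr, ← Finset.filter_or]
    apply Finset.filter_true_of_mem
    intro j hj
    exact (mem_bdry_iff hIB j).1 hj
  have hdisj : Disjoint Fl Fr := by
    rw [Finset.disjoint_left]
    intro j hj1 hj2
    simp only [hFl, hFr, Finset.mem_filter] at hj1 hj2
    omega
  have hsum : ∑ j ∈ bdry (J k), W k i j = (∑ j ∈ Fl, W k i j) + ∑ j ∈ Fr, W k i j := by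
    rw [← hunion, Finset.sum_union hdisj]
  rw [hsum]
  have hleft : ∑ j ∈ Fl, W k i j = eL m J W k i := by
    by_cases hk1 : k = 1
    · have hmn0 : mn = 0 := by rw [hmn, hk1]; exact blockMin_one hn hB1 hcover
      have : Fl = ∅ := by
        rw [hFl]
        apply Finset.filter_false_of_mem
        intro j hj
        omega
      rw [this, eL, if_pos hk1, Finset.sum_empty]
    · have hmn1 : 1 ≤ mn := by
        have h0 : blockMin (J 1) = 0 := blockMin_one hn hB1 hcover
        have := (hB1.2 1 k le_rfl (by omega) hkIcc.2).1
        omega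
      have hlt : mn - 1 < n := by omega
      have hFlsing : Fl = {(⟨mn - 1, hlt⟩ : Fin n)} := by
        ext j
        simp only [hFl, Finset.mem_filter, Finset.mem_singleton]
        constructor
        · rintro ⟨_, hv⟩
          exact Fin.ext (by simp; omega)
        · rintro rfl
          refine ⟨(mem_bdry_iff hIB _).2 (Or.inl (by simp; omega)), by simp; omega⟩
      rw [hFlsing, Finset.sum_singleton, eL, if_neg hk1]
      have hcast : ((mn : ℤ) - 1) = ((mn - 1 : ℕ) : ℤ) := by omega
      rw [hcast, entryZ_coe (W k) i (mn - 1) hlt]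
  have hright : ∑ j ∈ Fr, W k i j = eR m J W k i := by
    by_cases hkm : k = m
    · have hmxn : mx = n - 1 := by rw [hmx, hkm]; exact blockMax_m hn hm hB1 hcover
      have : Fr = ∅ := by
        rw [hFr]
        apply Finset.filter_false_of_mem
        intro j hj
        have := j.isLt
        omega
      rw [this, eR, if_pos hkm, Finset.sum_empty]
    · have hmxm : mx < blockMax (J m) := by
        exact (hB1.2 k m hkIcc.1 (by omega) le_rfl).2
      have hmxM : blockMax (J m) = n - 1 := blockMax_m hn hm hB1 hcover
      have hlt : mx + 1 < n := by omega
      have hFrsing : Fr = {(⟨mx + 1, hlt⟩ : Fin n)} := by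
        ext j
        simp only [hFr, Finset.mem_filter, Finset.mem_singleton]
        constructor
        · rintro ⟨_, hv⟩
          exact Fin.ext (by simp; omega)
        · rintro rfl
          refine ⟨(mem_bdry_iff hIB _).2 (Or.inr (by simp [hmx])), by simp⟩
      rw [hFrsing, Finset.sum_singleton, eR, if_neg hkm]
      have hcast : ((mx : ℤ) + 1) = ((mx + 1 : ℕ) : ℤ) := by omega
      rw [hcast, entryZ_coe (W k) i (mx + 1) hlt]
  rw [hleft, hright]

lemma eLR_nonneg (hblock : ∀ k ∈ Finset.Icc 1 m, GibbsBlock (J k) (W k))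
    {k : ℕ} (hk : k ∈ Finset.Icc 1 m) (i : Fin n) :
    0 ≤ eL m J W k i ∧ eL m J W k i ≤ 1 ∧ 0 ≤ eR m J W k i ∧ eR m J W k i ≤ 1 := by
  have hb := (hblock k hk).1
  rw [eL, eR]
  refine ⟨?_, ?_, ?_, ?_⟩ <;> split
  · norm_num
  · exact (entryZ_bounds hb _ _).1
  · norm_num
  · exact (entryZ_bounds hb _ _).2
  · norm_num
  · exact (entryZ_bounds hb _ _).1
  · norm_num
  · exact (entryZ_bounds hb _ _).2

end SumBdry
section DescList

lemma mem_descList {m l : ℕ} : l ∈ descList m ↔ 1 ≤ l ∧ l ≤ m := by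
  simp only [descList, List.mem_map, List.mem_range]
  constructor
  · rintro ⟨i, hi, rfl⟩; omega
  · rintro ⟨h1, h2⟩; exact ⟨m - l, by omega, by omega⟩

lemma nodup_descList (m : ℕ) : (descList m).Nodup := by
  apply List.Nodup.map_on _ List.nodup_range
  intro x hx y hy h
  simp only [List.mem_range] at hx hy
  omega

end DescList

section Prod

variable {n m : ℕ} {J : ℕ → Finset (Fin n)} {W : ℕ → Matrix (Fin n) (Fin n) ℝ} {ε : ℝ}

lemma hatW_row_id (hblock : ∀ k ∈ Finset.Icc 1 m, GibbsBlock (J k) (W k))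
    {l : ℕ} (hl : l ∈ Finset.Icc 1 m) {i : Fin n} (hi : i ∉ J l) (j : Fin n) :
    hatW J W ε l i j = if i = j then 1 else 0 := by
  simp only [hatW]
  rw [if_neg (show ¬(i ∈ J l ∧ j ∈ J l ∪ bdry (J l)) from fun h => hi h.1), add_zero]
  exact (hblock l hl).2.1 i hi j

/-- Row `i` of a product of hat-matrices is the identity row if `i` avoids all blocks. -/
lemma prod_row_id (hblock : ∀ k ∈ Finset.Icc 1 m, GibbsBlock (J k) (W k))
    (S : List ℕ) (hS : ∀ l ∈ S, l ∈ Finset.Icc 1 m) {i : Fin n}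
    (hi : ∀ l ∈ S, i ∉ J l) (j : Fin n) :
    ((S.map (hatW J W ε)).prod) i j = if i = j then 1 else 0 := by
  induction S with
  | nil => simp [Matrix.one_apply]
  | cons s S ih =>
    rw [List.map_cons, List.prod_cons, Matrix.mul_apply]
    have hrow : ∀ t, hatW J W ε s i t = if i = t then 1 else 0 :=
      hatW_row_id hblock (hS s (by simp)) (hi s (by simp))
    have : ∀ t, hatW J W ε s i t * ((S.map (hatW J W ε)).prod) t j =
        (if i = t then ((S.map (hatW J W ε)).prod) t j else 0) := by
      intro t
      rw [hrow t]
      split <;> simp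
    rw [Finset.sum_congr rfl (fun t _ => this t), Finset.sum_ite_eq]
    simp only [Finset.mem_univ, if_true]
    exact ih (fun l hl => hS l (by simp [hl])) (fun l hl => hi l (by simp [hl]))

/-- Row `i` of a product of hat-matrices over pairwise-separated blocks equals the
row of the single factor whose block contains `i`. -/
lemma prod_row_block (hblock : ∀ k ∈ Finset.Icc 1 m, GibbsBlock (J k) (W k))
    (S : List ℕ) (hS : ∀ l ∈ S, l ∈ Finset.Icc 1 m) (hnd : S.Nodup)
    {k : ℕ} (hkS : k ∈ S) {i : Fin n} (hi : i ∈ J k)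
    (hsep : ∀ l ∈ S, l ≠ k → ∀ t : Fin n, t ∈ J k ∪ bdry (J k) → t ∉ J l)
    (j : Fin n) :
    ((S.map (hatW J W ε)).prod) i j = hatW J W ε k i j := by
  induction S with
  | nil => simp at hkS
  | cons s S ih =>
    rw [List.map_cons, List.prod_cons, Matrix.mul_apply]
    by_cases hsk : s = k
    · subst hsk
      have hkS' : s ∉ S := (List.nodup_cons.1 hnd).1
      have hzero : ∀ t : Fin n, t ∉ J s ∪ bdry (J s) → hatW J W ε s i t = 0 := by
        intro t ht
        simp only [hatW]
        rw [if_neg (show ¬(i ∈ J s ∧ t ∈ J s ∪ bdry (J s)) from fun h => ht h.2), add_zero]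
        exact (hblock s (hS s (by simp))).2.2 i hi t
          (fun hb => ht (Finset.mem_union_right _ hb))
      have hid : ∀ t : Fin n, t ∈ J s ∪ bdry (J s) →
          ((S.map (hatW J W ε)).prod) t j = if t = j then 1 else 0 := by
        intro t ht
        apply prod_row_id hblock S (fun l hl => hS l (by simp [hl]))
        intro l hl
        have hlk : l ≠ s := fun h => hkS' (h ▸ hl)
        exact hsep l (by simp [hl]) hlk t ht
      have : ∀ t : Fin n, hatW J W ε s i t * ((S.map (hatW J W ε)).prod) t j =
          hatW J W ε s i t * (if t = j then 1 else 0) := by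
        intro t
        by_cases ht : t ∈ J s ∪ bdry (J s)
        · rw [hid t ht]
        · rw [hzero t ht, zero_mul, zero_mul]
      rw [Finset.sum_congr rfl (fun t _ => this t)]
      simp only [mul_ite, mul_one, mul_zero]
      rw [Finset.sum_ite_eq']
      simp
    · have hiJs : i ∉ J s := by
        intro hmem
        exact hsep s (by simp) hsk i (Finset.mem_union_left _ hi) hmem
      have hrow : ∀ t, hatW J W ε s i t = if i = t then 1 else 0 :=
        hatW_row_id hblock (hS s (by simp)) hiJs
      have : ∀ t, hatW J W ε s i t * ((S.map (hatW J W ε)).prod) t j =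
          (if i = t then ((S.map (hatW J W ε)).prod) t j else 0) := by
        intro t
        rw [hrow t]
        split <;> simp
      rw [Finset.sum_congr rfl (fun t _ => this t), Finset.sum_ite_eq]
      simp only [Finset.mem_univ, if_true]
      have hkS' : k ∈ S := by
        rcases List.mem_cons.1 hkS with h | h
        · exact absurd h.symm hsk
        · exact h
      exact ih (fun l hl => hS l (by simp [hl])) (List.nodup_cons.1 hnd).2 hkS'
        (fun l hl hlk t ht => hsep l (by simp [hl]) hlk t ht)

end Prod
section RowBound

variable {n m : ℕ} {J : ℕ → Finset (Fin n)} {W : ℕ → Matrix (Fin n) (Fin n) ℝ} {ε : ℝ}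

lemma row_bound (hn : 1 ≤ n) (hm : 1 ≤ m) (hB1 : CondB1 m J)
    (hcover : ∀ i : Fin n, ∃ k ∈ Finset.Icc 1 m, i ∈ J k)
    (hblock : ∀ k ∈ Finset.Icc 1 m, GibbsBlock (J k) (W k)) (hε0 : 0 ≤ ε)
    {k : ℕ} (hk : k ∈ Finset.Icc 1 m) {i : Fin n} (hi : i ∈ J k)
    (v : Fin n → ℝ) (B C Lr : ℝ) (hB : 0 ≤ B) (hC : 0 ≤ C)
    (hLr : ((J k).card : ℝ) ≤ Lr)
    (hv1 : ∀ j ∈ bdry (J k), v j ≤ B) (hv2 : ∀ j ∈ J k, v j ≤ C) :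
    ∑ j, hatW J W ε k i j * v j ≤
      (eL m J W k i + eR m J W k i) * B + ε * (2 * B + Lr * C) := by
  classical
  have hIB := interval_k hB1 hk
  have hdisj : Disjoint (J k) (bdry (J k)) := by
    rw [Finset.disjoint_right]
    exact fun t ht => not_mem_bdry_self ht
  have hsplit : ∑ j, hatW J W ε k i j * v j =
      (∑ j ∈ bdry (J k), W k i j * v j) + ε * ∑ j ∈ J k ∪ bdry (J k), v j := by
    simp only [hatW, add_mul]
    rw [Finset.sum_add_distrib]
    congr 1
    · symm
      apply Finset.sum_subset (Finset.subset_univ _)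
      intro j _ hj
      rw [(hblock k hk).2.2 i hi j hj, zero_mul]
    · have heq : ∀ j, (if i ∈ J k ∧ j ∈ J k ∪ bdry (J k) then ε else 0) * v j =
          if j ∈ J k ∪ bdry (J k) then ε * v j else 0 := by
        intro j
        by_cases h : j ∈ J k ∪ bdry (J k) <;> simp [h, hi]
      rw [Finset.sum_congr rfl (fun j _ => heq j)]
      rw [Finset.sum_ite_mem, Finset.univ_inter, Finset.mul_sum]
  rw [hsplit]
  have h1 : ∑ j ∈ bdry (J k), W k i j * v j ≤ (eL m J W k i + eR m J W k i) * B := by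
    rw [← sum_bdry_eq hn hm hB1 hcover hk i, Finset.sum_mul]
    apply Finset.sum_le_sum
    intro j hj
    have h0 := ((hblock k hk).1 i j).1
    exact mul_le_mul_of_nonneg_left (hv1 j hj) h0
  have h2 : ∑ j ∈ J k ∪ bdry (J k), v j ≤ 2 * B + Lr * C := by
    rw [Finset.sum_union hdisj]
    have h2a : ∑ j ∈ J k, v j ≤ ((J k).card : ℝ) * C := by
      calc ∑ j ∈ J k, v j ≤ ∑ _j ∈ J k, C := Finset.sum_le_sum (fun j hj => hv2 j hj)
        _ = ((J k).card : ℝ) * C := by rw [Finset.sum_const, nsmul_eq_mul]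
    have h2b : ∑ j ∈ bdry (J k), v j ≤ 2 * B := by
      calc ∑ j ∈ bdry (J k), v j ≤ ∑ _j ∈ bdry (J k), B :=
          Finset.sum_le_sum (fun j hj => hv1 j hj)
        _ = ((bdry (J k)).card : ℝ) * B := by rw [Finset.sum_const, nsmul_eq_mul]
        _ ≤ 2 * B := by
            apply mul_le_mul_of_nonneg_right _ hB
            exact_mod_cast card_bdry_le hIB
    have h2c : ((J k).card : ℝ) * C ≤ Lr * C := mul_le_mul_of_nonneg_right hLr hC
    linarith
  have h3 : ε * ∑ j ∈ J k ∪ bdry (J k), v j ≤ ε * (2 * B + Lr * C) :=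
    mul_le_mul_of_nonneg_left h2 hε0
  linarith

end RowBound
theorem stmt13 {n m : ℕ} (hn : 1 ≤ n) (hm : 1 ≤ m) (hmodd : m % 2 = 1)
    (J : ℕ → Finset (Fin n)) (W : ℕ → Matrix (Fin n) (Fin n) ℝ)
    (hcover : ∀ i : Fin n, ∃ k ∈ Finset.Icc 1 m, i ∈ J k)
    (hB1 : CondB1 m J) (hB2 : CondB2 m J)
    (hblock : ∀ k ∈ Finset.Icc 1 m, GibbsBlock (J k) (W k))
    (ε : ℝ) (hε0 : 0 ≤ ε) (hε1 : ε < 1)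
    (lam Wbar : ℝ) (L : ℕ)
    (hlam : lam = sSup {x : ℝ | ∃ k ∈ Finset.Icc 1 m, ∃ i : Fin n,
      i ∉ Jminus m J k ∧ x = eL m J W k i + eR m J W k i})
    (hWbar : Wbar = sSup {x : ℝ | ∃ k ∈ Finset.Icc 1 m, ∃ i ∈ J k,
      x = ∑ j ∈ bdry (J k), W k i j})
    (hL : L = (Finset.Icc 1 m).sup fun k => (J k).card)
    (r : Fin n → ℝ) (a a' b : ℝ) (ha : 0 < a) (ha' : 0 < a') (hb : 0 < b)
    (hra : ∀ k ∈ Finset.Icc 1 m, k % 2 = 0 → ∀ i : Fin n, i ∉ Jminus m J k → r i = a)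
    (hra' : ∀ k ∈ Finset.Icc 1 m, k % 2 = 1 → ∀ i : Fin n, i ∉ Jminus m J k → r i = a')
    (hrb : ∀ k ∈ Finset.Icc 1 m, k % 2 = 0 → ∀ i ∈ J k, i ∈ Jminus m J k → r i = b)
    (c : ℝ) (hc : c = 2 * a + (L : ℝ) * max a' b) :
    (∀ k ∈ Finset.Icc 1 m, k % 2 = 0 → ∀ i : Fin n, i ∉ Jminus m J k →
      ∑ j, (((((descList m).filter fun l => l % 2 = 0).map (hatW J W ε)).prod) *
          ((((descList m).filter fun l => l % 2 = 1).map (hatW J W ε)).prod)) i j * r j ≤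
        lam ^ 2 * a + ε * (lam * c + 2 * lam * a + 2 * ε * c +
          (L : ℝ) * a * max 1 Wbar + ε * (L : ℝ) * c)) ∧
    (∀ k ∈ Finset.Icc 1 m, k % 2 = 1 → ∀ i : Fin n, i ∉ Jminus m J k →
      ∑ j, (((((descList m).filter fun l => l % 2 = 0).map (hatW J W ε)).prod) *
          ((((descList m).filter fun l => l % 2 = 1).map (hatW J W ε)).prod)) i j * r j ≤
        lam * a + ε * (2 * a + (L : ℝ) * max a' b)) ∧
    (∀ k ∈ Finset.Icc 1 m, k % 2 = 0 → ∀ i ∈ J k, i ∈ Jminus m J k →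
      ∑ j, (((((descList m).filter fun l => l % 2 = 0).map (hatW J W ε)).prod) *
          ((((descList m).filter fun l => l % 2 = 1).map (hatW J W ε)).prod)) i j * r j ≤
        lam * Wbar * a + ε * (Wbar * c + 2 * lam * a + 2 * ε * c +
          (L : ℝ) * a * max 1 Wbar + ε * (L : ℝ) * c)) := by

  classical
  obtain ⟨hB1i, hB1o⟩ := hB1
  have hB1' : CondB1 m J := ⟨hB1i, hB1o⟩
  -- lists
  set Se : List ℕ := (descList m).filter (fun l => l % 2 = 0) with hSe
  set So : List ℕ := (descList m).filter (fun l => l % 2 = 1) with hSo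
  have hmemSe : ∀ l, l ∈ Se ↔ (1 ≤ l ∧ l ≤ m ∧ l % 2 = 0) := by
    intro l
    simp only [hSe, List.mem_filter, mem_descList, decide_eq_true_eq]
    tauto
  have hmemSo : ∀ l, l ∈ So ↔ (1 ≤ l ∧ l ≤ m ∧ l % 2 = 1) := by
    intro l
    simp only [hSo, List.mem_filter, mem_descList, decide_eq_true_eq]
    tauto
  have hndSe : Se.Nodup := (nodup_descList m).filter _
  have hndSo : So.Nodup := (nodup_descList m).filter _
  have hSeIcc : ∀ l ∈ Se, l ∈ Finset.Icc 1 m := by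
    intro l hl; rw [hmemSe] at hl; simp [Finset.mem_Icc]; omega
  have hSoIcc : ∀ l ∈ So, l ∈ Finset.Icc 1 m := by
    intro l hl; rw [hmemSo] at hl; simp [Finset.mem_Icc]; omega
  set E : Matrix (Fin n) (Fin n) ℝ := (Se.map (hatW J W ε)).prod with hE
  set O : Matrix (Fin n) (Fin n) ℝ := (So.map (hatW J W ε)).prod with hO
  -- separation of same-parity blocks
  have hsepP : ∀ k ∈ Finset.Icc 1 m, ∀ l ∈ Finset.Icc 1 m, l % 2 = k % 2 → l ≠ k →
      ∀ t : Fin n, t ∈ J k ∪ bdry (J k) → t ∉ J l := by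
    intro k hk l hl hpar hne t ht htl
    simp only [Finset.mem_Icc] at hk hl
    have hfar : l + 2 ≤ k ∨ k + 2 ≤ l := by omega
    exact not_mem_far hB1' hB2 (by simp [Finset.mem_Icc]; omega)
      (by simp [Finset.mem_Icc]; omega) hfar htl ht
  -- L bound
  have hcard : ∀ k ∈ Finset.Icc 1 m, ((J k).card : ℝ) ≤ (L : ℝ) := by
    intro k hk
    have : (J k).card ≤ L := hL ▸ Finset.le_sup (f := fun k => (J k).card) hk
    exact_mod_cast this
  -- sSup facts
  have hlam_bdd : BddAbove {x : ℝ | ∃ k ∈ Finset.Icc 1 m, ∃ i : Fin n,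
      i ∉ Jminus m J k ∧ x = eL m J W k i + eR m J W k i} := by
    refine ⟨2, ?_⟩
    rintro x ⟨k, hk, i, _, rfl⟩
    have h := eLR_nonneg hblock hk i
    linarith [h.1, h.2.1, h.2.2.1, h.2.2.2]
  have hlam_mem : ∀ k ∈ Finset.Icc 1 m, ∀ i : Fin n, i ∉ Jminus m J k →
      eL m J W k i + eR m J W k i ≤ lam := by
    intro k hk i hi
    rw [hlam]
    exact le_csSup hlam_bdd ⟨k, hk, i, hi, rfl⟩
  have hlam0 : 0 ≤ lam := by
    have h1Icc : (1 : ℕ) ∈ Finset.Icc 1 m := by simp [Finset.mem_Icc]; omega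
    obtain ⟨s0, hs0, hs0v⟩ := blockMin_exists (interval_k hB1' h1Icc).1
    have hs0v' : (s0 : ℕ) = 0 := by rw [hs0v]; exact blockMin_one hn hB1' hcover
    have hs0nJ : s0 ∉ Jminus m J 1 := by
      rw [mem_Jminus_iff]
      rintro ⟨l, hl, hne, hmem⟩
      simp only [Finset.mem_Icc] at hl
      have := (hB1o 1 l le_rfl (by omega) hl.2).1
      have := blockMin_le hmem
      have := blockMin_one hn hB1' hcover
      omega
    have hle := hlam_mem 1 h1Icc s0 hs0nJ
    have h := eLR_nonneg hblock h1Icc s0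
    linarith [h.1, h.2.2.1]
  have hWbar_bdd : BddAbove {x : ℝ | ∃ k ∈ Finset.Icc 1 m, ∃ i ∈ J k,
      x = ∑ j ∈ bdry (J k), W k i j} := by
    refine ⟨2, ?_⟩
    rintro x ⟨k, hk, i, hik, rfl⟩
    calc ∑ j ∈ bdry (J k), W k i j ≤ ∑ _j ∈ bdry (J k), (1 : ℝ) :=
        Finset.sum_le_sum (fun j _ => ((hblock k hk).1 i j).2)
      _ = ((bdry (J k)).card : ℝ) := by simp
      _ ≤ 2 := by exact_mod_cast card_bdry_le (interval_k hB1' hk)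
  have hWbar_mem : ∀ k ∈ Finset.Icc 1 m, ∀ i ∈ J k,
      eL m J W k i + eR m J W k i ≤ Wbar := by
    intro k hk i hik
    rw [hWbar, ← sum_bdry_eq hn hm hB1' hcover hk i]
    exact le_csSup hWbar_bdd ⟨k, hk, i, hik, rfl⟩
  -- positivity of c
  have hmaxab : 0 < max a' b := lt_max_of_lt_left ha'
  have hc0 : 0 < c := by
    rw [hc]
    have : (0 : ℝ) ≤ (L : ℝ) * max a' b := mul_nonneg (Nat.cast_nonneg _) hmaxab.le
    linarith
  -- values of r
  have hr_bdry_odd : ∀ l ∈ Finset.Icc 1 m, l % 2 = 1 → ∀ j ∈ bdry (J l), r j = a := by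
    intro l hl hlodd j hj
    obtain ⟨l', hl', hadj, hmem, huniq⟩ := bdry_loc hn hm hB1' hB2 hcover hl hj
    have hl'par : l' % 2 = 0 := by omega
    have hnJm : j ∉ Jminus m J l' := by
      rw [mem_Jminus_iff]
      rintro ⟨l'', hl'', hne, hmem''⟩
      exact huniq l'' hl'' hne hmem''
    exact hra l' hl' hl'par j hnJm
  have hr_Jodd : ∀ l ∈ Finset.Icc 1 m, l % 2 = 1 → ∀ j ∈ J l, r j ≤ max a' b := by
    intro l hl hlodd j hj
    by_cases hjm : j ∈ Jminus m J l
    · rw [mem_Jminus_iff] at hjm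
      obtain ⟨l', hl', hne, hmem'⟩ := hjm
      have hadj := adjacent_of_mem hB1' hB2 hl hl' hne hj hmem'
      have hl'par : l' % 2 = 0 := by omega
      have : r j = b := hrb l' hl' hl'par j hmem' (mem_Jminus_iff.2 ⟨l, hl, by omega, hj⟩)
      rw [this]; exact le_max_right _ _
    · have : r j = a' := hra' l hl hlodd j hjm
      rw [this]; exact le_max_left _ _
  -- the inner odd-row bound
  have hvrow : ∀ l ∈ Finset.Icc 1 m, l % 2 = 1 → ∀ t ∈ J l,
      ∑ j, hatW J W ε l t j * r j ≤ (eL m J W l t + eR m J W l t) * a + ε * c := by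
    intro l hl hlodd t ht
    have := row_bound hn hm hB1' hcover hblock hε0 hl ht r a (max a' b) (L : ℝ)
      ha.le hmaxab.le (hcard l hl)
      (fun j hj => le_of_eq (hr_bdry_odd l hl hlodd j hj))
      (fun j hj => hr_Jodd l hl hlodd j hj)
    calc ∑ j, hatW J W ε l t j * r j ≤
        (eL m J W l t + eR m J W l t) * a + ε * (2 * a + (L : ℝ) * max a' b) := this
      _ = (eL m J W l t + eR m J W l t) * a + ε * c := by rw [hc]
  -- v t := (O r) t and its computations
  set v : Fin n → ℝ := fun t => ∑ j, O t j * r j with hv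
  have hv_block : ∀ l ∈ Finset.Icc 1 m, l % 2 = 1 → ∀ t ∈ J l,
      v t = ∑ j, hatW J W ε l t j * r j := by
    intro l hl hlodd t ht
    have hrow : ∀ j, O t j = hatW J W ε l t j := by
      intro j
      apply prod_row_block hblock So hSoIcc hndSo ((hmemSo l).2 ⟨by
        simp only [Finset.mem_Icc] at hl; omega, by
        simp only [Finset.mem_Icc] at hl; omega, hlodd⟩) ht
      intro l' hl' hne t' ht'
      exact hsepP l hl l' (hSoIcc l' hl') (by
        rw [hmemSo] at hl'; omega) hne t' ht'
    simp only [hv]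
    exact Finset.sum_congr rfl (fun j _ => by rw [hrow j])
  have hv_id : ∀ t : Fin n, (∀ l ∈ Finset.Icc 1 m, l % 2 = 1 → t ∉ J l) → v t = r t := by
    intro t ht
    have hrow : ∀ j, O t j = if t = j then 1 else 0 := by
      intro j
      apply prod_row_id hblock So hSoIcc
      intro l hl
      exact ht l (hSoIcc l hl) (by rw [hmemSo] at hl; omega)
    simp only [hv]
    rw [Finset.sum_congr rfl (fun j _ => by rw [hrow j])]
    simp [ite_mul]
  -- bounds for v
  have hv_bdd_bdry : ∀ k ∈ Finset.Icc 1 m, k % 2 = 0 → ∀ t ∈ bdry (J k),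
      v t ≤ lam * a + ε * c := by
    intro k hk hkev t ht
    obtain ⟨l, hl, hadj, hmem, huniq⟩ := bdry_loc hn hm hB1' hB2 hcover hk ht
    have hlodd : l % 2 = 1 := by omega
    have hnJm : t ∉ Jminus m J l := by
      rw [mem_Jminus_iff]
      rintro ⟨l'', hl'', hne, hmem''⟩
      exact huniq l'' hl'' hne hmem''
    rw [hv_block l hl hlodd t hmem]
    calc ∑ j, hatW J W ε l t j * r j ≤ (eL m J W l t + eR m J W l t) * a + ε * c :=
        hvrow l hl hlodd t hmem
      _ ≤ lam * a + ε * c := by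
          have := hlam_mem l hl t hnJm
          nlinarith [ha.le]
  have hv_bdd_J : ∀ k ∈ Finset.Icc 1 m, k % 2 = 0 → ∀ t ∈ J k,
      v t ≤ a * max 1 Wbar + ε * c := by
    intro k hk hkev t ht
    by_cases hodd : ∃ l ∈ Finset.Icc 1 m, l % 2 = 1 ∧ t ∈ J l
    · obtain ⟨l, hl, hlodd, hmem⟩ := hodd
      rw [hv_block l hl hlodd t hmem]
      calc ∑ j, hatW J W ε l t j * r j ≤ (eL m J W l t + eR m J W l t) * a + ε * c :=
          hvrow l hl hlodd t hmem
        _ ≤ Wbar * a + ε * c := by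
            have := hWbar_mem l hl t hmem
            nlinarith [ha.le]
        _ ≤ a * max 1 Wbar + ε * c := by
            have h1 : Wbar ≤ max 1 Wbar := le_max_right _ _
            nlinarith [ha.le]
    · push_neg at hodd
      rw [hv_id t (fun l hl hlp => hodd l hl hlp)]
      have htJm : t ∉ Jminus m J k := by
        rw [mem_Jminus_iff]
        rintro ⟨l', hl', hne, hmem'⟩
        have hadj := adjacent_of_mem hB1' hB2 hk hl' hne ht hmem'
        have : l' % 2 = 1 := by omega
        exact hodd l' hl' this hmem'
      rw [hra k hk hkev t htJm]
      have h1 : (1 : ℝ) ≤ max 1 Wbar := le_max_left _ _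
      nlinarith [mul_nonneg hε0 hc0.le, ha.le]
  -- swap of sums
  have hswap : ∀ i : Fin n, ∑ j, (E * O) i j * r j = ∑ t, E i t * v t := by
    intro i
    simp only [Matrix.mul_apply, Finset.sum_mul, hv]
    rw [Finset.sum_comm]
    apply Finset.sum_congr rfl
    intro t _
    rw [Finset.mul_sum]
    apply Finset.sum_congr rfl
    intro j _
    ring
  -- bounds B and C
  set B : ℝ := lam * a + ε * c with hBdef
  set C : ℝ := a * max 1 Wbar + ε * c with hCdef
  have hB0 : 0 ≤ B := by
    rw [hBdef]
    nlinarith [hlam0, ha.le, mul_nonneg hε0 hc0.le]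
  have hC0 : 0 ≤ C := by
    rw [hCdef]
    have h1 : (1 : ℝ) ≤ max 1 Wbar := le_max_left _ _
    nlinarith [ha.le, mul_nonneg hε0 hc0.le]
  -- even-row master bound
  have heven : ∀ k ∈ Finset.Icc 1 m, k % 2 = 0 → ∀ i ∈ J k,
      ∑ j, (E * O) i j * r j ≤
        (eL m J W k i + eR m J W k i) * B + ε * (2 * B + (L : ℝ) * C) := by
    intro k hk hkev i hi
    rw [hswap i]
    have hErow : ∀ t, E i t = hatW J W ε k i t := by
      intro t
      apply prod_row_block hblock Se hSeIcc hndSe ((hmemSe k).2 ⟨by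
        simp only [Finset.mem_Icc] at hk; omega, by
        simp only [Finset.mem_Icc] at hk; omega, hkev⟩) hi
      intro l' hl' hne t' ht'
      exact hsepP k hk l' (hSeIcc l' hl') (by rw [hmemSe] at hl'; omega) hne t' ht'
    rw [Finset.sum_congr rfl (fun t _ => by rw [hErow t])]
    exact row_bound hn hm hB1' hcover hblock hε0 hk hi v B C (L : ℝ) hB0 hC0
      (hcard k hk) (fun t htb => hv_bdd_bdry k hk hkev t htb)
      (fun t htJ => hv_bdd_J k hk hkev t htJ)
  refine ⟨?_, ?_, ?_⟩
  · -- bullet 1: k even, i ∉ J_{-k}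
    intro k hk hkev i hi
    have hiJ : i ∈ J k := mem_of_not_Jminus hcover hk hi
    have h1 := heven k hk hkev i hiJ
    have h2 := hlam_mem k hk i hi
    calc ∑ j, (E * O) i j * r j ≤
        (eL m J W k i + eR m J W k i) * B + ε * (2 * B + (L : ℝ) * C) := h1
      _ ≤ lam * B + ε * (2 * B + (L : ℝ) * C) := by
          have := mul_le_mul_of_nonneg_right h2 hB0
          linarith
      _ = lam ^ 2 * a + ε * (lam * c + 2 * lam * a + 2 * ε * c +
          (L : ℝ) * a * max 1 Wbar + ε * (L : ℝ) * c) := by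
          rw [hBdef, hCdef]; ring
  · -- bullet 2: k odd, i ∉ J_{-k}
    intro k hk hkodd i hi
    have hiJ : i ∈ J k := mem_of_not_Jminus hcover hk hi
    rw [hswap i]
    have hErow : ∀ t, E i t = if i = t then 1 else 0 := by
      intro t
      apply prod_row_id hblock Se hSeIcc
      intro l hl hmem
      have hle : l ≠ k := by rw [hmemSe] at hl; omega
      exact hi (mem_Jminus_iff.2 ⟨l, hSeIcc l hl, hle, hmem⟩)
    rw [Finset.sum_congr rfl (fun t _ => by rw [hErow t])]
    rw [show ∑ t, (if i = t then (1 : ℝ) else 0) * v t = v i by simp [ite_mul]]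
    rw [hv_block k hk hkodd i hiJ]
    have h1 := hvrow k hk hkodd i hiJ
    have h2 := hlam_mem k hk i hi
    calc ∑ j, hatW J W ε k i j * r j ≤ (eL m J W k i + eR m J W k i) * a + ε * c := h1
      _ ≤ lam * a + ε * c := by nlinarith [ha.le]
      _ = lam * a + ε * (2 * a + (L : ℝ) * max a' b) := by rw [hc]
  · -- bullet 3: k even, i ∈ J k ∩ J_{-k}
    intro k hk hkev i hiJ hiJm
    have h1 := heven k hk hkev i hiJ
    have h2 := hWbar_mem k hk i hiJ
    calc ∑ j, (E * O) i j * r j ≤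
        (eL m J W k i + eR m J W k i) * B + ε * (2 * B + (L : ℝ) * C) := h1
      _ ≤ Wbar * B + ε * (2 * B + (L : ℝ) * C) := by
          have := mul_le_mul_of_nonneg_right h2 hB0
          linarith
      _ = lam * Wbar * a + ε * (Wbar * c + 2 * lam * a + 2 * ε * c +
          (L : ℝ) * a * max 1 Wbar + ε * (L : ℝ) * c) := by
          rw [hBdef, hCdef]; ring
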